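/- For every f ∈ H and every λ ≥ 0, (1/2) inf_{δ>0} ( K_D(f,δ)² + λ²/(2δ²) ) ≤ L_D(f,λ) ≤ inf_{δ>0} ( K_D(f,δ)² + λ²/(4δ²) ). -/

import Mathlib

open MeasureTheory Real

noncomputable section

variable {H : Type*} [NormedAddCommGroup H] [InnerProductSpace ℝ H] {ι : Type*}

/-- Membership in `L1(D)` for a finite or countable dictionary `D = {φ j}`:
`h = ∑_j θ_j φ_j` with `∑_j |θ_j| < ∞`. -/
def memL1c (φ : ι → H) (h : H) : Prop :=
  ∃ θ : ι → ℝ, Summable (fun j => |θ j|) ∧ HasSum (fun j => θ j • φ j) h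

/-- The ℓ¹ norm `‖h‖_{L1(D)}` for a finite or countable dictionary. -/
def l1normc (φ : ι → H) (h : H) : ℝ :=
  sInf {s : ℝ | ∃ θ : ι → ℝ, Summable (fun j => |θ j|) ∧
    HasSum (fun j => θ j • φ j) h ∧ s = ∑' j, |θ j|}

/-- `L_D(f,λ) = inf_{h ∈ L1(D)} (‖f - h‖² + λ‖h‖_{L1(D)})`. -/
def LD (φ : ι → H) (f : H) (lam : ℝ) : ℝ :=
  ⨅ h : {h : H // memL1c φ h}, (‖f - (h : H)‖ ^ 2 + lam * l1normc φ (h : H))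

/-- The K-functional `K_D(f,δ) = inf_{h ∈ L1(D)} (‖f - h‖ + δ‖h‖_{L1(D)})`. -/
def KD (φ : ι → H) (f : H) (δ : ℝ) : ℝ :=
  ⨅ h : {h : H // memL1c φ h}, (‖f - (h : H)‖ + δ * l1normc φ (h : H))

lemma memL1c_zero (φ : ι → H) : memL1c φ (0 : H) :=
  ⟨fun _ => 0, by simpa using summable_zero, by simpa using hasSum_zero⟩

lemma l1normc_nonneg (φ : ι → H) (h : H) : 0 ≤ l1normc φ h :=
  Real.sInf_nonneg (by
    rintro s ⟨θ, _, _, rfl⟩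
    exact tsum_nonneg fun j => abs_nonneg _)

set_option maxHeartbeats 1000000 in
/-- Equivalence between the deterministic Lasso functional `L_D` and the
K-functional `K_D`. -/
theorem statement_10 {H : Type*} [NormedAddCommGroup H] [InnerProductSpace ℝ H]
    {ι : Type*} [Countable ι] (φ : ι → H) (f : H) (lam : ℝ) (hlam : 0 ≤ lam) :
    (1 / 2) * (⨅ δ : {δ : ℝ // 0 < δ},
        (KD φ f (δ : ℝ) ^ 2 + lam ^ 2 / (2 * (δ : ℝ) ^ 2))) ≤ LD φ f lam ∧
    LD φ f lam ≤ ⨅ δ : {δ : ℝ // 0 < δ},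
        (KD φ f (δ : ℝ) ^ 2 + lam ^ 2 / (4 * (δ : ℝ) ^ 2)) := by
  haveI hne : Nonempty {h : H // memL1c φ h} := ⟨⟨0, memL1c_zero φ⟩⟩
  haveI : Nonempty {δ : ℝ // 0 < δ} := ⟨⟨1, one_pos⟩⟩
  set F : {h : H // memL1c φ h} → ℝ :=
    fun h => ‖f - (h : H)‖ ^ 2 + lam * l1normc φ (h : H) with hFdef
  have hF0 : ∀ h, 0 ≤ F h := fun h =>
    add_nonneg (sq_nonneg _) (mul_nonneg hlam (l1normc_nonneg _ _))
  have bddF : BddBelow (Set.range F) := ⟨0, by rintro x ⟨h, rfl⟩; exact hF0 h⟩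
  have hLD : LD φ f lam = ⨅ h, F h := rfl
  -- basic facts about KD
  have hKDle : ∀ (δ : ℝ), 0 ≤ δ → ∀ h : {h : H // memL1c φ h},
      KD φ f δ ≤ ‖f - (h : H)‖ + δ * l1normc φ (h : H) := by
    intro δ hδ h
    exact ciInf_le ⟨0, by
      rintro x ⟨h', rfl⟩
      exact add_nonneg (norm_nonneg _) (mul_nonneg hδ (l1normc_nonneg _ _))⟩ h
  have hKD0 : ∀ (δ : ℝ), 0 ≤ δ → 0 ≤ KD φ f δ := by
    intro δ hδ
    exact Real.iInf_nonneg fun h =>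
      add_nonneg (norm_nonneg _) (mul_nonneg hδ (l1normc_nonneg _ _))
  constructor
  · -- lower bound : (1/2) * I ≤ LD
    set I : ℝ := ⨅ δ : {δ : ℝ // 0 < δ},
        (KD φ f (δ : ℝ) ^ 2 + lam ^ 2 / (2 * (δ : ℝ) ^ 2)) with hIdef
    have bddI : BddBelow (Set.range fun δ : {δ : ℝ // 0 < δ} =>
        KD φ f (δ : ℝ) ^ 2 + lam ^ 2 / (2 * (δ : ℝ) ^ 2)) := by
      refine ⟨0, ?_⟩
      rintro x ⟨δ, rfl⟩
      exact add_nonneg (sq_nonneg _) (div_nonneg (sq_nonneg _) (by positivity))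
    refine le_of_forall_pos_le_add ?_
    intro ε hε
    obtain ⟨h, hh⟩ := exists_lt_of_ciInf_lt
      (show (⨅ h, F h) < LD φ f lam + ε / 2 by
        rw [hLD]; exact lt_add_of_pos_right _ (by linarith))
    set a : ℝ := ‖f - (h : H)‖ with hadef
    set t : ℝ := l1normc φ (h : H) with htdef
    have ha0 : 0 ≤ a := norm_nonneg _
    have ht0 : 0 ≤ t := l1normc_nonneg _ _
    -- find a good δ
    have key : ∃ δ : ℝ, 0 < δ ∧
        KD φ f δ ^ 2 + lam ^ 2 / (2 * δ ^ 2) ≤ 2 * (a ^ 2 + lam * t) + ε := by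
      rcases eq_or_lt_of_le ht0 with ht | ht
      · -- t = 0
        set δ : ℝ := Real.sqrt (lam ^ 2 / (2 * ε)) + 1 with hδdef
        have hs0 : 0 ≤ Real.sqrt (lam ^ 2 / (2 * ε)) := Real.sqrt_nonneg _
        have hδpos : 0 < δ := by positivity
        refine ⟨δ, hδpos, ?_⟩
        have hK : KD φ f δ ≤ a := by
          have := hKDle δ hδpos.le h
          rw [← hadef, ← htdef, ← ht] at this
          simpa using this
        have hK2 : KD φ f δ ^ 2 ≤ a ^ 2 :=
          pow_le_pow_left₀ (hKD0 δ hδpos.le) hK 2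
        have hsq : lam ^ 2 / (2 * ε) ≤ δ ^ 2 := by
          have h1 : Real.sqrt (lam ^ 2 / (2 * ε)) ^ 2 = lam ^ 2 / (2 * ε) :=
            Real.sq_sqrt (by positivity)
          nlinarith [hs0]
        have hfrac : lam ^ 2 / (2 * δ ^ 2) ≤ ε := by
          rw [div_le_iff₀ (by positivity)]
          have := (div_le_iff₀ (by positivity : (0:ℝ) < 2 * ε)).mp hsq
          nlinarith
        nlinarith [mul_nonneg hlam ht0]
      · -- t > 0
        set s : ℝ := (lam * t + ε / 2) / (2 * t ^ 2) with hsdef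
        have hspos : 0 < s := div_pos
          (add_pos_of_nonneg_of_pos (mul_nonneg hlam ht0) (by linarith)) (by positivity)
        set δ : ℝ := Real.sqrt s with hδdef
        have hδpos : 0 < δ := Real.sqrt_pos.mpr hspos
        have hδ2 : δ ^ 2 = s := Real.sq_sqrt hspos.le
        refine ⟨δ, hδpos, ?_⟩
        have hK : KD φ f δ ≤ a + δ * t := by
          have := hKDle δ hδpos.le h
          rw [← hadef, ← htdef] at this
          exact this
        have hK2 : KD φ f δ ^ 2 ≤ (a + δ * t) ^ 2 :=
          pow_le_pow_left₀ (hKD0 δ hδpos.le) hK 2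
        have hsplit : (a + δ * t) ^ 2 ≤ 2 * a ^ 2 + 2 * δ ^ 2 * t ^ 2 := by
          nlinarith [sq_nonneg (a - δ * t)]
        have e1 : 2 * s * t ^ 2 = lam * t + ε / 2 := by
          rw [hsdef]; field_simp
        have e2 : lam ^ 2 / (2 * s) ≤ lam * t + ε / 2 := by
          rw [div_le_iff₀ (by positivity)]
          have h2s : 2 * s * t ^ 2 = lam * t + ε / 2 := e1
          have hc0 : 0 ≤ lam * t := mul_nonneg hlam ht0
          have hcsq : (lam * t) ^ 2 ≤ (lam * t + ε / 2) ^ 2 := by nlinarith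
          nlinarith [hcsq, e1, mul_pos ht ht]
        rw [hδ2] at hsplit ⊢
        linarith [hK2, hsplit, e1, e2]
    obtain ⟨δ, hδpos, hδ⟩ := key
    have hI : I ≤ KD φ f δ ^ 2 + lam ^ 2 / (2 * δ ^ 2) := ciInf_le bddI ⟨δ, hδpos⟩
    have hFh : F h = a ^ 2 + lam * t := rfl
    rw [hFh] at hh
    linarith
  · -- upper bound
    refine le_ciInf ?_
    rintro ⟨δ, hδ⟩
    simp only
    have hKDnn : 0 ≤ KD φ f δ := hKD0 δ hδ.le
    have key : ∀ ε : ℝ, 0 < ε →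
        LD φ f lam ≤ (KD φ f δ + ε) ^ 2 + lam ^ 2 / (4 * δ ^ 2) := by
      intro ε hε
      obtain ⟨h, hh⟩ := exists_lt_of_ciInf_lt
        (show (⨅ h : {h : H // memL1c φ h},
            (‖f - (h : H)‖ + δ * l1normc φ (h : H))) < KD φ f δ + ε from
          lt_add_of_pos_right _ hε)
      set a : ℝ := ‖f - (h : H)‖ with hadef
      set t : ℝ := l1normc φ (h : H) with htdef
      have ha0 : 0 ≤ a := norm_nonneg _
      have ht0 : 0 ≤ t := l1normc_nonneg _ _
      have step1 : LD φ f lam ≤ a ^ 2 + lam * t := ciInf_le bddF h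
      have hyoung : lam * t ≤ δ ^ 2 * t ^ 2 + lam ^ 2 / (4 * δ ^ 2) := by
        have : lam * t - δ ^ 2 * t ^ 2 ≤ lam ^ 2 / (4 * δ ^ 2) := by
          rw [le_div_iff₀ (by positivity)]
          nlinarith [sq_nonneg (2 * δ ^ 2 * t - lam)]
        linarith
      have step2 : a ^ 2 + lam * t ≤ (a + δ * t) ^ 2 + lam ^ 2 / (4 * δ ^ 2) := by
        nlinarith [mul_nonneg ha0 (mul_nonneg hδ.le ht0)]
      have step3 : (a + δ * t) ^ 2 ≤ (KD φ f δ + ε) ^ 2 :=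
        pow_le_pow_left₀ (add_nonneg ha0 (mul_nonneg hδ.le ht0)) hh.le 2
      linarith
    have tend : Filter.Tendsto (fun ε : ℝ => (KD φ f δ + ε) ^ 2 + lam ^ 2 / (4 * δ ^ 2))
        (nhdsWithin 0 (Set.Ioi 0)) (nhds ((KD φ f δ + 0) ^ 2 + lam ^ 2 / (4 * δ ^ 2))) := by
      apply Filter.Tendsto.mono_left _ nhdsWithin_le_nhds
      exact (Continuous.tendsto (by continuity) 0)
    have hle : LD φ f lam ≤ (KD φ f δ + 0) ^ 2 + lam ^ 2 / (4 * δ ^ 2) := by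
      refine ge_of_tendsto tend ?_
      filter_upwards [self_mem_nhdsWithin] with ε hε
      exact key ε hε
    simpa using hle
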